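/- Insertion invariance: let u, v ∈ ℤ² with det₂[u,v] = 1, appearing consecutively in a complete unimodular fan, and insert w = u + v between them (so det₂[u,w] = det₂[w,v] = 1). Then the quantity Σ_k c_k − 3N (where N is the number of rays and u_{k−1}+u_{k+1} = c_k u_k) is unchanged by the insertion. -/
import Mathlib


/-- The 2×2 determinant of two integer 2-vectors. -/
def det2 (u v : Fin 2 → ℤ) : ℤ := u 0 * v 1 - u 1 * v 0

lemma fin_add_one_val {n : ℕ} [NeZero n] (k : Fin n) (h : k.val + 1 < n) :
    ((k + 1) : Fin n).val = k.val + 1 := by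
  rw [Fin.val_add, Fin.val_one', Nat.mod_eq_of_lt (show 1 < n by omega),
    Nat.mod_eq_of_lt h]

lemma fin_add_one_val_top {n : ℕ} [NeZero n] (k : Fin n) (h : k.val + 1 = n) :
    ((k + 1) : Fin n).val = 0 := by
  by_cases h1 : n = 1
  · subst h1; have := (k + 1).isLt; omega
  · rw [Fin.val_add, Fin.val_one', Nat.mod_eq_of_lt (show 1 < n by omega), h, Nat.mod_self]

lemma fin_sub_one_val {n : ℕ} [NeZero n] (k : Fin n) (h : 0 < k.val) :
    ((k - 1) : Fin n).val = k.val - 1 := by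
  have hk := k.isLt
  have e : (k - 1 : Fin n).val = (n - (1 : Fin n).val + k.val) % n := by rw [Fin.sub_def]
  rw [e, Fin.val_one', Nat.mod_eq_of_lt (show 1 < n by omega)]
  have e2 : n - 1 + k.val = n + (k.val - 1) := by omega
  rw [e2, Nat.add_mod_left, Nat.mod_eq_of_lt (by omega)]

lemma fin_sub_one_val_zero {n : ℕ} [NeZero n] (k : Fin n) (h : k.val = 0) :
    ((k - 1) : Fin n).val = n - 1 := by
  have hn := Nat.pos_of_ne_zero (NeZero.ne n)
  have e : (k - 1 : Fin n).val = (n - (1 : Fin n).val + k.val) % n := by rw [Fin.sub_def]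
  rw [e, h, Fin.val_one']
  by_cases h1 : n = 1
  · subst h1; simp
  · rw [Nat.mod_eq_of_lt (show 1 < n by omega), Nat.add_zero,
      Nat.mod_eq_of_lt (show n - 1 < n by omega)]

lemma smul_cancel_of_det {v w : Fin 2 → ℤ} (hd : det2 v w = 1) {a b : ℤ}
    (h : a • v = b • v) : a = b := by
  by_contra hab
  have h0 := congrFun h 0
  have h1 := congrFun h 1
  simp only [Pi.smul_apply, smul_eq_mul] at h0 h1
  have hab' : a - b ≠ 0 := sub_ne_zero.mpr hab
  have hv0 : v 0 = 0 := by
    rcases mul_eq_zero.mp (show (a - b) * v 0 = 0 by linear_combination h0) with h' | h'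
    · exact absurd h' hab'
    · exact h'
  have hv1 : v 1 = 0 := by
    rcases mul_eq_zero.mp (show (a - b) * v 1 = 0 by linear_combination h1) with h' | h'
    · exact absurd h' hab'
    · exact h'
  unfold det2 at hd
  rw [hv0, hv1] at hd
  simp at hd

/-- Insertion invariance: if the complete unimodular fan `u'₁,…,u'_{N+1}` is
obtained from the fan `u₁,…,u_N` by inserting `w = u_N + u₁` between the
cyclically consecutive rays `u_N` and `u₁` (so `det₂[u_N,w] = det₂[w,u₁] = 1`),
then the quantity `Σ_k c_k − 3N` (with `u_{k−1} + u_{k+1} = c_k·u_k`) is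
unchanged. -/
theorem fan_insertion_invariance (N : ℕ) [NeZero N] (hN : 3 ≤ N)
    (u : Fin N → Fin 2 → ℤ) (c : Fin N → ℤ)
    (u' : Fin (N + 1) → Fin 2 → ℤ) (c' : Fin (N + 1) → ℤ)
    (hdet : ∀ k, det2 (u k) (u (k + 1)) = 1)
    (hc : ∀ k, u (k - 1) + u (k + 1) = c k • u k)
    (hins : ∀ (k : Fin (N + 1)) (h : (k : ℕ) < N), u' k = u ⟨k, h⟩)
    (hlast : u' (Fin.last N) =
      u ⟨N - 1, by omega⟩ + u ⟨0, by omega⟩)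
    (hdet' : ∀ k, det2 (u' k) (u' (k + 1)) = 1)
    (hc' : ∀ k, u' (k - 1) + u' (k + 1) = c' k • u' k) :
    (∑ k : Fin (N + 1), c' k) - 3 * ((N : ℤ) + 1) =
      (∑ k : Fin N, c k) - 3 * (N : ℤ) := by
  classical
  have h0N : (0 : ℕ) < N := by omega
  have hN1 : N - 1 < N := by omega
  -- the value of c' at the new last ray
  have hlastc : c' (Fin.last N) = 1 := by
    have h1 := hc' (Fin.last N)
    have hlv : (Fin.last N).val = N := rfl
    -- last - 1 has value N - 1 < N
    have es : u' (Fin.last N - 1) = u ⟨N - 1, hN1⟩ := by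
      have hl : (Fin.last N - 1 : Fin (N + 1)).val = N - 1 := by
        rw [fin_sub_one_val _ (by rw [hlv]; omega), hlv]
      rw [hins _ (show ((Fin.last N - 1 : Fin (N + 1)) : ℕ) < N by rw [hl]; omega)]
      exact congrArg u (Fin.ext (by rw [hl]))
    -- last + 1 = 0
    have ea : u' (Fin.last N + 1) = u ⟨0, h0N⟩ := by
      have hl : (Fin.last N + 1 : Fin (N + 1)).val = 0 := by
        rw [fin_add_one_val_top _ (by rw [hlv])]
      rw [hins _ (show ((Fin.last N + 1 : Fin (N + 1)) : ℕ) < N by rw [hl]; omega)]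
      exact congrArg u (Fin.ext (by rw [hl]))
    rw [es, ea, hlast] at h1
    have h2 : (1 : ℤ) • u' (Fin.last N) = c' (Fin.last N) • u' (Fin.last N) := by
      rw [one_smul, hlast, ← h1]
    exact (smul_cancel_of_det (hdet' (Fin.last N)) h2).symm
  -- pointwise values of c' at old rays
  have key : ∀ j : Fin N, c' (Fin.castSucc j) =
      c j + (if j = ⟨0, h0N⟩ then 1 else 0) + (if j = ⟨N - 1, hN1⟩ then 1 else 0) := by
    intro j
    have hjlt := j.isLt
    have hKv : (Fin.castSucc j).val = j.val := rfl
    have h1 := hc' (Fin.castSucc j)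
    have hK : u' (Fin.castSucc j) = u j := by
      rw [hins _ (show ((Fin.castSucc j : Fin (N + 1)) : ℕ) < N from hjlt)]
      exact congrArg u (Fin.ext rfl)
    by_cases hj0 : j.val = 0
    · -- first ray: c' = c + 1
      have hsub : u' (Fin.castSucc j - 1) = u (j - 1) + u j := by
        have hlst : Fin.castSucc j - 1 = Fin.last N :=
          Fin.ext (by rw [fin_sub_one_val_zero _ (by rw [hKv, hj0])]; rfl)
        rw [hlst, hlast]
        congr 1
        · exact congrArg u (Fin.ext (by rw [fin_sub_one_val_zero _ hj0]))
        · exact congrArg u (Fin.ext (by rw [hj0]))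
      have hadd : u' (Fin.castSucc j + 1) = u (j + 1) := by
        have hv : (Fin.castSucc j + 1 : Fin (N + 1)).val = 1 := by
          rw [fin_add_one_val _ (by rw [hKv, hj0]; omega), hKv, hj0]
        rw [hins _ (show ((Fin.castSucc j + 1 : Fin (N + 1)) : ℕ) < N by rw [hv]; omega)]
        exact congrArg u (Fin.ext (by rw [hv, fin_add_one_val _ (by omega), hj0]))
      rw [hsub, hadd, hK] at h1
      have h2 : (c j + 1) • u j = c' (Fin.castSucc j) • u j := by
        rw [add_smul, one_smul, ← hc j, ← h1]; abel
      have h3 := (smul_cancel_of_det (hdet j) h2).symm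
      have e0 : j = ⟨0, h0N⟩ := Fin.ext hj0
      have eN : j ≠ ⟨N - 1, hN1⟩ := by
        intro h
        have : (j : ℕ) = N - 1 := by rw [h]
        omega
      rw [if_pos e0, if_neg eN, h3]; ring
    · by_cases hjN : j.val = N - 1
      · -- last old ray: c' = c + 1
        have hsub : u' (Fin.castSucc j - 1) = u (j - 1) := by
          have hv : (Fin.castSucc j - 1 : Fin (N + 1)).val = N - 2 := by
            rw [fin_sub_one_val _ (by rw [hKv]; omega), hKv, hjN]; omega
          rw [hins _ (show ((Fin.castSucc j - 1 : Fin (N + 1)) : ℕ) < N by rw [hv]; omega)]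
          exact congrArg u (Fin.ext (by rw [hv, fin_sub_one_val _ (by omega), hjN]; omega))
        have hadd : u' (Fin.castSucc j + 1) = u j + u (j + 1) := by
          have hlst : Fin.castSucc j + 1 = Fin.last N :=
            Fin.ext (by rw [fin_add_one_val _ (by rw [hKv, hjN]; omega), hKv, hjN]; show N - 1 + 1 = N; omega)
          rw [hlst, hlast]
          congr 1
          · exact congrArg u (Fin.ext (by rw [hjN]))
          · exact congrArg u (Fin.ext (by rw [fin_add_one_val_top _ (by rw [hjN]; omega)]))
        rw [hsub, hadd, hK] at h1
        have h2 : (c j + 1) • u j = c' (Fin.castSucc j) • u j := by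
          rw [add_smul, one_smul, ← hc j, ← h1]; abel
        have h3 := (smul_cancel_of_det (hdet j) h2).symm
        have e0 : j ≠ ⟨0, h0N⟩ := by
          intro h
          have : (j : ℕ) = 0 := by rw [h]
          omega
        have eN : j = ⟨N - 1, hN1⟩ := Fin.ext hjN
        rw [if_neg e0, if_pos eN, h3]; ring
      · -- middle ray: c' = c
        have hsub : u' (Fin.castSucc j - 1) = u (j - 1) := by
          have hv : (Fin.castSucc j - 1 : Fin (N + 1)).val = j.val - 1 := by
            rw [fin_sub_one_val _ (by rw [hKv]; omega), hKv]
          rw [hins _ (show ((Fin.castSucc j - 1 : Fin (N + 1)) : ℕ) < N by rw [hv]; omega)]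
          exact congrArg u (Fin.ext (by rw [hv, fin_sub_one_val _ (by omega)]))
        have hadd : u' (Fin.castSucc j + 1) = u (j + 1) := by
          have hv : (Fin.castSucc j + 1 : Fin (N + 1)).val = j.val + 1 := by
            rw [fin_add_one_val _ (by rw [hKv]; omega), hKv]
          rw [hins _ (show ((Fin.castSucc j + 1 : Fin (N + 1)) : ℕ) < N by rw [hv]; omega)]
          exact congrArg u (Fin.ext (by rw [hv, fin_add_one_val _ (by omega)]))
        rw [hsub, hadd, hK] at h1
        have h2 : c j • u j = c' (Fin.castSucc j) • u j := by rw [← hc j, ← h1]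
        have h3 := (smul_cancel_of_det (hdet j) h2).symm
        have e0 : j ≠ ⟨0, h0N⟩ := by
          intro h
          have : (j : ℕ) = 0 := by rw [h]
          omega
        have eN : j ≠ ⟨N - 1, hN1⟩ := by
          intro h
          have : (j : ℕ) = N - 1 := by rw [h]
          omega
        rw [if_neg e0, if_neg eN, h3]; ring
  -- assemble
  rw [Fin.sum_univ_castSucc, hlastc,
    Finset.sum_congr rfl (fun j _ => key j), Finset.sum_add_distrib,
    Finset.sum_add_distrib, Finset.sum_ite_eq', Finset.sum_ite_eq']
  simp only [Finset.mem_univ, if_true]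
  ring
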